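/- Let p > 0 and r > 0 with r ≠ 1, and define f(x) = p(1 − r)x^p / ((1 + x^p)(r + x^p)) for x > 0 (with x^p the real power). Then f(1) = p(1 − r)/(2(1 + r)) and |f(1)| ≤ p/2. Moreover the function x ↦ |f(x)| attains its unique global maximum on (0,∞) at x = r^{1/(2p)}, where f(r^{1/(2p)}) = p(1 − √r)/(1 + √r); in particular |f(x)| ≤ p|1 − √r|/(1 + √r) ≤ p for all x > 0, with equality in the first inequality if and only if x = r^{1/(2p)}. -/

import Mathlib

/-- The function `f(x, p, r) = p (1 - r) x^p / ((1 + x^p)(r + x^p))` from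
Proposition `fxpr` of the paper (`x ^ p` is the real power). -/
noncomputable def paperF (x p r : ℝ) : ℝ :=
  p * (1 - r) * x ^ p / ((1 + x ^ p) * (r + x ^ p))

/-- For `p > 0`, `r > 0`, `r ≠ 1`: `f(1) = p(1-r)/(2(1+r))` with
`|f(1)| ≤ p/2`; the function `x ↦ |f(x)|` attains its unique global maximum on `(0, ∞)`
at `x = r^{1/(2p)}`, where `f(r^{1/(2p)}) = p(1-√r)/(1+√r)`; in particular
`|f(x)| ≤ p|1-√r|/(1+√r) ≤ p` for all `x > 0`, with equality in the first inequality
iff `x = r^{1/(2p)}`. -/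
theorem paperF_max
    (p r : ℝ) (hp : 0 < p) (hr : 0 < r) (hr1 : r ≠ 1) :
    paperF 1 p r = p * (1 - r) / (2 * (1 + r)) ∧
    |paperF 1 p r| ≤ p / 2 ∧
    paperF (r ^ (1 / (2 * p))) p r = p * (1 - Real.sqrt r) / (1 + Real.sqrt r) ∧
    (∀ x : ℝ, 0 < x → |paperF x p r| ≤ p * |1 - Real.sqrt r| / (1 + Real.sqrt r)) ∧
    p * |1 - Real.sqrt r| / (1 + Real.sqrt r) ≤ p ∧
    (∀ x : ℝ, 0 < x →
      (|paperF x p r| = p * |1 - Real.sqrt r| / (1 + Real.sqrt r) ↔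
        x = r ^ (1 / (2 * p)))) := by
  have hp' : p ≠ 0 := ne_of_gt hp
  set s := Real.sqrt r with hs
  have hs0 : 0 < s := Real.sqrt_pos.mpr hr
  have hs2 : s ^ 2 = r := Real.sq_sqrt hr.le
  have h1r : (1:ℝ) - r ≠ 0 := sub_ne_zero.mpr (Ne.symm hr1)
  have h1rp : 0 < |1 - r| := abs_pos.mpr h1r
  have habs1r : |1 - r| = |1 - s| * (1 + s) := by
    rw [← hs2]
    have : (1:ℝ) - s ^ 2 = (1 - s) * (1 + s) := by ring
    rw [this, abs_mul, abs_of_pos (by positivity : (0:ℝ) < 1 + s)]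
  -- key lemma about y = x^p
  have key : ∀ y : ℝ, 0 < y →
      |p * (1 - r) * y / ((1 + y) * (r + y))| ≤ p * |1 - s| / (1 + s) ∧
      (|p * (1 - r) * y / ((1 + y) * (r + y))| = p * |1 - s| / (1 + s) ↔ y = s) := by
    intro y hy
    have hD : (0:ℝ) < (1 + y) * (r + y) := by positivity
    have hDid : (1 + y) * (r + y) = (1 + s) ^ 2 * y + (y - s) ^ 2 := by
      rw [← hs2]; ring
    have habs : |p * (1 - r) * y / ((1 + y) * (r + y))|
        = p * |1 - r| * y / ((1 + y) * (r + y)) := by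
      rw [abs_div, abs_mul, abs_mul, abs_of_pos hp, abs_of_pos hy, abs_of_pos hD]
    have htarget : p * |1 - s| / (1 + s) = p * |1 - r| / (1 + s) ^ 2 := by
      rw [habs1r]; field_simp
    constructor
    · rw [habs, htarget, div_le_div_iff₀ hD (by positivity)]
      nlinarith [sq_nonneg (y - s), mul_pos hp h1rp, sq_nonneg ((y - s) * (1 + s))]
    · rw [habs, htarget]
      constructor
      · intro h
        rw [div_eq_div_iff hD.ne' (by positivity : ((1:ℝ)+s)^2 ≠ 0)] at h
        have h2 : p * |1 - r| * (y - s) ^ 2 = 0 := by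
          linear_combination (-1 : ℝ) * h - p * |1 - r| * hDid
        have h3 : (y - s) ^ 2 = 0 := by
          rcases mul_eq_zero.mp h2 with h4 | h4
          · exact absurd h4 (ne_of_gt (mul_pos hp h1rp))
          · exact h4
        have := pow_eq_zero_iff (n := 2) (by norm_num) |>.mp h3
        linarith
      · intro h
        subst h
        rw [div_eq_div_iff hD.ne' (by positivity : ((1:ℝ)+s)^2 ≠ 0), hDid]
        ring
  have hx0p : (r ^ (1 / (2 * p))) ^ p = s := by
    rw [← Real.rpow_mul hr.le, show 1 / (2 * p) * p = 1 / 2 by field_simp, hs,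
      Real.sqrt_eq_rpow]
  have hone : (1:ℝ) ^ p = 1 := Real.one_rpow p
  refine ⟨?_, ?_, ?_, ?_, ?_, ?_⟩
  · rw [paperF, hone]; ring
  · rw [paperF, hone]
    have hD : (0:ℝ) < (1 + 1) * (r + 1) := by positivity
    rw [abs_div, abs_mul, abs_mul, abs_of_pos hp, abs_of_pos (by norm_num : (0:ℝ) < 1),
      abs_of_pos hD, div_le_div_iff₀ hD (by norm_num : (0:ℝ) < 2)]
    have habs2 : |1 - r| ≤ 1 + r := by
      rw [abs_le]; constructor <;> linarith
    nlinarith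
  · rw [paperF, hx0p, ← hs2]
    have h1 : (1:ℝ) + s ≠ 0 := by positivity
    field_simp
    ring
  · intro x hx
    have hy : 0 < x ^ p := Real.rpow_pos_of_pos hx p
    exact (key _ hy).1
  · have habs3 : |1 - s| ≤ 1 + s := by
      rw [abs_le]; constructor <;> linarith
    rw [div_le_iff₀ (by positivity : (0:ℝ) < 1 + s)]
    nlinarith
  · intro x hx
    have hy : 0 < x ^ p := Real.rpow_pos_of_pos hx p
    rw [paperF, (key _ hy).2]
    constructor
    · intro h
      have h2 : x ^ p = (r ^ (1 / (2 * p))) ^ p := by rw [hx0p, h]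
      exact Real.rpow_left_injOn hp' hx.le (Real.rpow_pos_of_pos hr _).le h2
    · intro h
      rw [h, hx0p]
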